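/- With f sampled from μ_k via independent uniform values a_s ∈ {0,...,m-2} (one per binary string s of length < k), for any fixed x ∈ [2^k], the probability that f(x) is 'bad'—i.e., some m-ary digit of f(x) equals 0 or m−1—is at most 2k/(m−1). -/

import Mathlib

open scoped ENNReal

/-- Index type for binary strings of length `< k`. -/
abbrev PrefixIdx (k : ℕ) := Σ i : Fin k, Fin (2 ^ (i : ℕ))

/-- Independent uniform samples `a_s ∈ {0,…,m-2}` for each binary string `s` of
length `< k` (degenerates if `m ≤ 1`). -/
noncomputable def aDist (m k : ℕ) : PMF (PrefixIdx k → ℕ) :=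
  if h : (Fintype.piFinset fun _ : PrefixIdx k => Finset.range (m - 1)).Nonempty then
    PMF.uniformOfFinset _ h
  else PMF.pure fun _ => 0

/-- `f x` has `i`-th `m`-ary digit `a_s + b` (digit 0 most significant), where
`s` is the length-`i` prefix of the `k`-bit string `x` and `b` is bit `i` of `x`. -/
def digitFun (m k : ℕ) (a : PrefixIdx k → ℕ) (x : ℕ) : ℕ :=
  ∑ i : Fin k,
    (a ⟨i, ⟨x / 2 ^ (k - (i : ℕ)) % 2 ^ (i : ℕ),
        Nat.mod_lt _ (Nat.two_pow_pos _)⟩⟩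
      + (x.testBit (k - 1 - (i : ℕ))).toNat) * m ^ (k - 1 - (i : ℕ))

/-- A value in `[m^k]` is bad if some of its `m`-ary digits equals `0` or `m-1`. -/
def BadVal (m k v : ℕ) : Prop :=
  ∃ i < k, v / m ^ (k - 1 - i) % m = 0 ∨ v / m ^ (k - 1 - i) % m = m - 1

lemma sum_eq_ofDigits (m k : ℕ) (d : Fin k → ℕ) :
    ∑ j : Fin k, d j * m ^ (j : ℕ) = Nat.ofDigits m (List.ofFn d) := by
  induction k with
  | zero => simp
  | succ n ih =>
    rw [List.ofFn_succ, Nat.ofDigits_cons, Fin.sum_univ_succ, ← ih]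
    simp only [Fin.val_zero, pow_zero, mul_one, Fin.val_succ, Finset.mul_sum]
    congr 1
    refine Finset.sum_congr rfl fun j _ => ?_
    ring

lemma ofDigits_div_pow_mod {m : ℕ} (hm : 1 < m) (L : List ℕ) (hL : ∀ x ∈ L, x < m)
    (t : ℕ) (ht : t < L.length) :
    Nat.ofDigits m L / m ^ t % m = L.get ⟨t, ht⟩ := by
  have hsplit : Nat.ofDigits m L
      = Nat.ofDigits m (L.take t) + m ^ t * Nat.ofDigits m (L.drop t) := by
    conv_lhs => rw [← List.take_append_drop t L]
    rw [Nat.ofDigits_append, List.length_take, min_eq_left ht.le]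
  have hlt : Nat.ofDigits m (L.take t) < m ^ t := by
    have := Nat.ofDigits_lt_base_pow_length hm (l := L.take t)
      (fun x hx => hL x (List.mem_of_mem_take hx))
    rwa [List.length_take, min_eq_left ht.le] at this
  have hdrop : L.drop t = L.get ⟨t, ht⟩ :: L.drop (t + 1) := by
    exact List.drop_eq_getElem_cons ht
  rw [hsplit, Nat.add_mul_div_left _ _ (pow_pos (by omega) t),
    Nat.div_eq_of_lt hlt, zero_add, hdrop, Nat.ofDigits_cons,
    Nat.add_mul_mod_self_left, Nat.mod_eq_of_lt (hL _ (List.get_mem L _))]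

lemma sum_digits_div_pow_mod {m k : ℕ} (hm : 1 < m) (d : Fin k → ℕ)
    (hd : ∀ j, d j < m) (t : Fin k) :
    (∑ j : Fin k, d j * m ^ (j : ℕ)) / m ^ (t : ℕ) % m = d t := by
  rw [sum_eq_ofDigits]
  have ht : (t : ℕ) < (List.ofFn d).length := by simpa using t.isLt
  rw [ofDigits_div_pow_mod hm _ (by
    intro y hy
    obtain ⟨j, rfl⟩ := List.mem_ofFn.1 hy
    exact hd j) (t : ℕ) ht]
  simp

/-- digit extraction for digitFun -/
lemma digitFun_digit (m k : ℕ) (hm : 1 < m) (a : PrefixIdx k → ℕ) (x : ℕ)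
    (c : Fin k → ℕ)
    (hc : ∀ i : Fin k, c i = a ⟨i, ⟨x / 2 ^ (k - (i : ℕ)) % 2 ^ (i : ℕ),
        Nat.mod_lt _ (Nat.two_pow_pos _)⟩⟩ + (x.testBit (k - 1 - (i : ℕ))).toNat)
    (hcm : ∀ i, c i < m) (i : Fin k) :
    digitFun m k a x / m ^ (k - 1 - (i : ℕ)) % m = c i := by
  have hrw : digitFun m k a x = ∑ j : Fin k, c (Fin.rev j) * m ^ (j : ℕ) := by
    rw [digitFun]
    refine Fintype.sum_equiv Fin.revPerm _ _ fun i => ?_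
    simp only [Fin.revPerm_apply, Fin.rev_rev]
    rw [← hc i]
    congr 2
    rw [Fin.val_rev]
    omega
  have hi : (k - 1 - (i : ℕ)) = ((Fin.rev i : Fin k) : ℕ) := by
    simp [Fin.val_rev]
    omega
  rw [hrw, hi, sum_digits_div_pow_mod hm _ (fun j => hcm _) (Fin.rev i), Fin.rev_rev]


/-- For `f ~ μ` (digit-based definition) and any fixed `x ∈ [2^k]`, the
probability that `f x` is bad is at most `2k/(m-1)`. -/
theorem stmt11 (m k x : ℕ) (hm : 2 ≤ m) (hx : x < 2 ^ k) :
    (aDist m k).toOuterMeasure {a | BadVal m k (digitFun m k a x)} ≤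
      (2 * k : ℝ≥0∞) / ((m : ℝ≥0∞) - 1) := by
  classical
  have hne : (Fintype.piFinset fun _ : PrefixIdx k => Finset.range (m - 1)).Nonempty :=
    ⟨fun _ => 0, Fintype.mem_piFinset.2 fun _ => Finset.mem_range.2 (by omega)⟩
  have hμ : aDist m k = PMF.uniformOfFinset _ hne := dif_pos hne
  set q : ℝ≥0∞ := ((m - 1 : ℕ) : ℝ≥0∞) with hqdef
  have hq : (m : ℝ≥0∞) - 1 = q := by
    rw [hqdef, ENNReal.natCast_sub, Nat.cast_one]
  have hq0 : q ≠ 0 := by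
    rw [hqdef]
    exact_mod_cast (by omega : (m - 1 : ℕ) ≠ 0)
  have hqt : q ≠ ∞ := by rw [hqdef]; exact ENNReal.natCast_ne_top _
  -- the prefix index for digit i
  set s : Fin k → PrefixIdx k := fun i =>
    ⟨i, ⟨x / 2 ^ (k - (i : ℕ)) % 2 ^ (i : ℕ), Nat.mod_lt _ (Nat.two_pow_pos _)⟩⟩ with hs
  set E : Fin k → Set (PrefixIdx k → ℕ) := fun i =>
    {a | a (s i) = 0} ∪ {a | a (s i) = m - 2} with hE
  -- single coordinate bound
  have hsingle : ∀ (c : PrefixIdx k) (v : ℕ),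
      (aDist m k).toOuterMeasure {a | a c = v} ≤ 1 / q := by
    intro c v
    rw [hμ, PMF.toOuterMeasure_uniformOfFinset_apply]
    set N := Fintype.card (PrefixIdx k) with hN
    have hN1 : 1 ≤ N := Fintype.card_pos_iff.2 ⟨c⟩
    have hcardpi : (Fintype.piFinset fun _ : PrefixIdx k => Finset.range (m - 1)).card
        = (m - 1) ^ N := by
      rw [Fintype.card_piFinset]
      simp [hN, Finset.card_range]
    have hfil : ∀ (inst : DecidablePred (· ∈ {a : PrefixIdx k → ℕ | a c = v})),
        ((Fintype.piFinset fun _ : PrefixIdx k => Finset.range (m - 1)).filter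
          (· ∈ {a | a c = v})).card ≤ (m - 1) ^ (N - 1) := by
      intro inst
      have h2 := Fintype.card_filter_piFinset_const (Finset.range (m - 1)) c v
      have hsubf : ((Fintype.piFinset fun _ : PrefixIdx k => Finset.range (m - 1)).filter
          (· ∈ {a | a c = v}))
          ⊆ ((Fintype.piFinset fun _ : PrefixIdx k => Finset.range (m - 1)).filter
          (fun f => f c = v)) := by
        intro f hf
        rw [Finset.mem_filter] at hf ⊢
        exact hf
      refine le_trans (Finset.card_le_card hsubf) ?_
      rw [h2]
      split_ifs with h
      · rw [Finset.card_range]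
      · positivity
    refine le_trans (ENNReal.div_le_div_right
      (Nat.cast_le.2 (hfil _) : _ ≤ (((m - 1) ^ (N - 1) : ℕ) : ℝ≥0∞)) _) ?_
    rw [hcardpi]
    push_cast
    rw [hq, show N = (N - 1) + 1 by omega, pow_succ]
    rw [show ((N - 1) + 1) - 1 = N - 1 by omega]
    refine le_of_eq ?_
    calc (q : ℝ≥0∞) ^ (N - 1) / (q ^ (N - 1) * q)
        = q ^ (N - 1) * 1 / (q ^ (N - 1) * q) := by rw [mul_one]
      _ = 1 / q := ENNReal.mul_div_mul_left _ _
          (pow_ne_zero _ hq0) (ENNReal.pow_ne_top hqt)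
  -- per-digit bound
  have hpair : ∀ i : Fin k, (aDist m k).toOuterMeasure (E i) ≤ 2 / q := by
    intro i
    calc (aDist m k).toOuterMeasure (E i)
        ≤ (aDist m k).toOuterMeasure {a | a (s i) = 0}
          + (aDist m k).toOuterMeasure {a | a (s i) = m - 2} := MeasureTheory.measure_union_le _ _
      _ ≤ 1 / q + 1 / q := add_le_add (hsingle _ _) (hsingle _ _)
      _ = 2 / q := by rw [ENNReal.div_add_div_same, one_add_one_eq_two]
  -- inclusion into the union
  have hsub : {a : PrefixIdx k → ℕ | BadVal m k (digitFun m k a x)} ∩ (aDist m k).support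
      ⊆ ⋃ i : Fin k, E i := by
    rintro a ⟨hbad, hsupp⟩
    rw [hμ, PMF.mem_support_uniformOfFinset_iff, Fintype.mem_piFinset] at hsupp
    have ha : ∀ j, a j < m - 1 := fun j => Finset.mem_range.1 (hsupp j)
    obtain ⟨i, hik, hdig⟩ := hbad
    set c : Fin k → ℕ := fun j => a (s j) + (x.testBit (k - 1 - (j : ℕ))).toNat with hc
    have hcm : ∀ j, c j < m := by
      intro j
      have := ha (s j)
      have hb : (x.testBit (k - 1 - (j : ℕ))).toNat ≤ 1 := Bool.toNat_le _
      simp only [hc]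
      omega
    have hdig' := digitFun_digit m k (by omega) a x c (fun _ => rfl) hcm ⟨i, hik⟩
    rw [hdig'] at hdig
    have hb : (x.testBit (k - 1 - i)).toNat ≤ 1 := Bool.toNat_le _
    have has : a (s ⟨i, hik⟩) < m - 1 := ha _
    refine Set.mem_iUnion.2 ⟨⟨i, hik⟩, ?_⟩
    simp only [hE, Set.mem_union, Set.mem_setOf_eq]
    simp only [hc] at hdig
    omega
  -- put it together
  calc (aDist m k).toOuterMeasure {a | BadVal m k (digitFun m k a x)}
      = (aDist m k).toOuterMeasure
        ({a | BadVal m k (digitFun m k a x)} ∩ (aDist m k).support) :=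
        (PMF.toOuterMeasure_apply_inter_support _ _).symm
    _ ≤ (aDist m k).toOuterMeasure (⋃ i : Fin k, E i) :=
        (aDist m k).toOuterMeasure.mono hsub
    _ ≤ ∑' i : Fin k, (aDist m k).toOuterMeasure (E i) := MeasureTheory.measure_iUnion_le E
    _ ≤ ∑' _i : Fin k, 2 / q := ENNReal.tsum_le_tsum hpair
    _ = (k : ℝ≥0∞) * (2 / q) := by
        rw [tsum_fintype]
        simp [Finset.sum_const, Fintype.card_fin, nsmul_eq_mul]
    _ = (2 * k : ℝ≥0∞) / ((m : ℝ≥0∞) - 1) := by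
        rw [hq, div_eq_mul_inv, div_eq_mul_inv]
        ring
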